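/- Let b ∈ ℝ⁷ be such that rank M(b) = 3. Then the derivative at b of the polynomial map ℝ⁷ → ℝ^{3×3}, b ↦ F(b), is an injective linear map ℝ⁷ → ℝ^{3×3}. (Thus the parameterization b ↦ F(b) of fundamental matrices is a submersion where it is defined.) -/

import Mathlib

open Matrix

attribute [local instance] Matrix.normedAddCommGroup Matrix.normedSpace

/-- The 3×4 camera matrix `M(b)` with rows `(1, b₁, b₂, b₃)`, `(b₄, b₅, b₆, b₇)`,
`(0, 0, 0, 1)`. -/
def Mcam (b : Fin 7 → ℝ) : Matrix (Fin 3) (Fin 4) ℝ :=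
  !![1, b 0, b 1, b 2; b 3, b 4, b 5, b 6; 0, 0, 0, 1]

/-- The fundamental matrix `F(b)` with rows `(b₄, b₅, b₆)`, `(−1, −b₁, −b₂)`,
`(−b₃b₄+b₇, −b₃b₅+b₁b₇, −b₃b₆+b₂b₇)`. -/
def Fmat (b : Fin 7 → ℝ) : Matrix (Fin 3) (Fin 3) ℝ :=
  !![b 3, b 4, b 5;
     -1, -(b 0), -(b 1);
     -(b 2) * b 3 + b 6, -(b 2) * b 4 + b 0 * b 6, -(b 2) * b 5 + b 1 * b 6]

/-- Auxiliary: identify an entry of the derivative of `Fmat` via uniqueness of derivatives. -/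
lemma Fmat_entry_deriv (b : Fin 7 → ℝ) (D : (Fin 7 → ℝ) →L[ℝ] Matrix (Fin 3) (Fin 3) ℝ)
    (hD : HasFDerivAt Fmat D b) (i j : Fin 3)
    (L : (Fin 7 → ℝ) →L[ℝ] ℝ) (hL : HasFDerivAt (fun b => Fmat b i j) L b) (v : Fin 7 → ℝ) :
    D v i j = L v := by
  have h2 : HasFDerivAt (fun b => Fmat b i j)
      (((ContinuousLinearMap.proj j).comp (ContinuousLinearMap.proj (R := ℝ)
        (φ := fun _ : Fin 3 => Fin 3 → ℝ) i)).comp D) b :=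
    (((ContinuousLinearMap.proj j).comp (ContinuousLinearMap.proj (R := ℝ)
        (φ := fun _ : Fin 3 => Fin 3 → ℝ) i)).hasFDerivAt).comp b hD
  rw [hL.unique h2]
  rfl

/-- Auxiliary: if the second row of `Mcam b` is the given combination of the other two,
then `Mcam b` does not have rank 3. -/
lemma Mcam_rank_ne (b : Fin 7 → ℝ) (h4 : b 4 = b 0 * b 3) (h5 : b 5 = b 1 * b 3) :
    (Mcam b).rank ≠ 3 := by
  intro h
  set c : Fin 3 → ℝ := ![-(b 3), 1, b 2 * b 3 - b 6] with hc
  have hker : (Mcam b)ᵀ.mulVecLin c = 0 := by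
    funext j
    fin_cases j <;>
      simp [Mcam, hc, mulVecLin, mulVec, dotProduct, Fin.sum_univ_three, Matrix.transpose_apply, Matrix.vecHead, Matrix.vecTail, Function.comp, h4, h5] <;> ring
  have hT : (Mcam b)ᵀ.rank = 3 := by rw [rank_transpose]; exact h
  have hsum := LinearMap.finrank_range_add_finrank_ker ((Mcam b)ᵀ.mulVecLin)
  rw [show Module.finrank ℝ (Fin 3 → ℝ) = 3 by simp] at hsum
  have hker0 : Module.finrank ℝ (LinearMap.ker ((Mcam b)ᵀ.mulVecLin)) = 0 := by
    have : (Mcam b)ᵀ.rank = Module.finrank ℝ (LinearMap.range ((Mcam b)ᵀ.mulVecLin)) := rfl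
    omega
  have hbot : LinearMap.ker ((Mcam b)ᵀ.mulVecLin) = ⊥ := Submodule.finrank_eq_zero.mp hker0
  have hc0 : c = 0 := by
    have : c ∈ LinearMap.ker ((Mcam b)ᵀ.mulVecLin) := LinearMap.mem_ker.mpr hker
    rwa [hbot, Submodule.mem_bot] at this
  have : (1 : ℝ) = 0 := by
    have := congrFun hc0 1
    simp [hc] at this
  norm_num at this

/-- If `rank M(b) = 3`, then the derivative at `b` of the polynomial map `b ↦ F(b)`
is an injective linear map `ℝ⁷ → ℝ^{3×3}`; thus the parameterization `b ↦ F(b)` of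
fundamental matrices is a submersion where it is defined. -/
theorem Fmat_derivative_injective
    (b : Fin 7 → ℝ) (hrank : (Mcam b).rank = 3)
    (D : (Fin 7 → ℝ) →L[ℝ] Matrix (Fin 3) (Fin 3) ℝ)
    (hD : HasFDerivAt Fmat D b) :
    Function.Injective D := by
  have key : ∀ v : Fin 7 → ℝ, D v = 0 → v = 0 := by
    intro v hv
    have hp : ∀ k : Fin 7, HasFDerivAt (fun b : Fin 7 → ℝ => b k)
        (ContinuousLinearMap.proj (R := ℝ) k) b := fun k => by exact hasFDerivAt_apply k b
    have hz : ∀ i j : Fin 3, D v i j = 0 := by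
      intro i j
      rw [hv]; rfl
    -- entry (0,0) : b 3
    have e00 : v 3 = 0 := by
      have := Fmat_entry_deriv b D hD 0 0 _ (by simpa [Fmat] using hp 3) v
      rw [hz 0 0] at this
      simpa using this.symm
    have e01 : v 4 = 0 := by
      have := Fmat_entry_deriv b D hD 0 1 _ (by simpa [Fmat] using hp 4) v
      rw [hz 0 1] at this
      simpa using this.symm
    have e02 : v 5 = 0 := by
      have := Fmat_entry_deriv b D hD 0 2 _ (by simpa [Fmat] using hp 5) v
      rw [hz 0 2] at this
      simpa using this.symm
    have e11 : v 0 = 0 := by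
      have := Fmat_entry_deriv b D hD 1 1 _ (by simpa [Fmat, Pi.neg_def, Pi.mul_def, Pi.add_def] using (hp 0).neg) v
      rw [hz 1 1] at this
      simpa using this.symm
    have e12 : v 1 = 0 := by
      have := Fmat_entry_deriv b D hD 1 2 _ (by simpa [Fmat, Pi.neg_def, Pi.mul_def, Pi.add_def] using (hp 1).neg) v
      rw [hz 1 2] at this
      simpa using this.symm
    have e20 : -(b 2) * v 3 + b 3 * (-(v 2)) + v 6 = 0 := by
      have := Fmat_entry_deriv b D hD 2 0 _
        (by simpa [Fmat, Pi.neg_def, Pi.mul_def, Pi.add_def] using ((hp 2).neg.mul (hp 3)).add (hp 6)) v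
      rw [hz 2 0] at this
      simpa using this.symm
    have e21 : -(b 2) * v 4 + b 4 * (-(v 2)) + (b 0 * v 6 + b 6 * v 0) = 0 := by
      have := Fmat_entry_deriv b D hD 2 1 _
        (by simpa [Fmat, Pi.neg_def, Pi.mul_def, Pi.add_def] using ((hp 2).neg.mul (hp 4)).add ((hp 0).mul (hp 6))) v
      rw [hz 2 1] at this
      simpa using this.symm
    have e22 : -(b 2) * v 5 + b 5 * (-(v 2)) + (b 1 * v 6 + b 6 * v 1) = 0 := by
      have := Fmat_entry_deriv b D hD 2 2 _
        (by simpa [Fmat, Pi.neg_def, Pi.mul_def, Pi.add_def] using ((hp 2).neg.mul (hp 5)).add ((hp 1).mul (hp 6))) v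
      rw [hz 2 2] at this
      simpa using this.symm
    have h6 : v 6 = b 3 * v 2 := by rw [e00] at e20; linarith
    have hv2 : v 2 = 0 := by
      by_contra h2
      have hb4 : b 4 = b 0 * b 3 := by
        rw [e01, e11, h6] at e21
        have : v 2 * (b 0 * b 3 - b 4) = 0 := by ring_nf; ring_nf at e21; linarith
        rcases mul_eq_zero.mp this with h | h
        · exact absurd h h2
        · linarith
      have hb5 : b 5 = b 1 * b 3 := by
        rw [e02, e12, h6] at e22
        have : v 2 * (b 1 * b 3 - b 5) = 0 := by ring_nf; ring_nf at e22; linarith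
        rcases mul_eq_zero.mp this with h | h
        · exact absurd h h2
        · linarith
      exact Mcam_rank_ne b hb4 hb5 hrank
    have h6' : v 6 = 0 := by rw [h6, hv2, mul_zero]
    funext k
    fin_cases k <;> simp [e00, e01, e02, e11, e12, hv2, h6']
  intro x y hxy
  have := key (x - y) (by rw [map_sub, hxy, sub_self])
  exact sub_eq_zero.mp this
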